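/- Let N ≥ 1 and let S be a finite set. For each s ∈ S let M_s be a real N×N matrix with |det M_s| = 1, and set C_s := M_s((0,∞)^N). Assume: (i) C_s ⊆ (0,∞)^N for every s; (ii) for s ≠ s′, the intersection C_s ∩ C_{s′} is Lebesgue-null; (iii) (0,∞)^N ∖ ⋃_{s∈S} C_s is Lebesgue-null. Let β ∈ ℝ^N have all coordinates β_i > 0, and assume ⟨β, M_s e_j⟩ > 0 for all s ∈ S and 1 ≤ j ≤ N. Then ∏_{i=1}^N β_i^{−1} = Σ_{s∈S} ∏_{j=1}^N ⟨β, M_s e_j⟩^{−1}. -/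

import Mathlib

open MeasureTheory Set

lemma aux_exp_int {b : ℝ} (hb : 0 < b) :
    ∫ x in Set.Ioi (0:ℝ), Real.exp (-(b * x)) = b⁻¹ := by
  have h := integral_comp_mul_left_Ioi (fun y => Real.exp (-y)) 0 hb
  simp only [mul_zero] at h
  rw [h, integral_exp_neg_Ioi_zero, smul_eq_mul, mul_one]

lemma aux_orthant {N : ℕ} (c : Fin N → ℝ) (hc : ∀ i, 0 < c i) :
    IntegrableOn (fun x : Fin N → ℝ => Real.exp (-(∑ j, c j * x j)))
      {x : Fin N → ℝ | ∀ i, 0 < x i} ∧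
    ∫ x in {x : Fin N → ℝ | ∀ i, 0 < x i}, Real.exp (-(∑ j, c j * x j))
      = ∏ j, (c j)⁻¹ := by
  set A : Set (Fin N → ℝ) := {x : Fin N → ℝ | ∀ i, 0 < x i} with hA_def
  have hA : MeasurableSet A := by
    have : A = Set.pi Set.univ (fun _ => Set.Ioi (0:ℝ)) := by
      ext x; simp [hA_def, Set.mem_pi]
    rw [this]; exact MeasurableSet.univ_pi fun _ => measurableSet_Ioi
  set g : Fin N → ℝ → ℝ :=
    fun i => (Set.Ioi (0:ℝ)).indicator (fun t => Real.exp (-(c i * t))) with hg_def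
  have hgi : ∀ i, Integrable (g i) := by
    intro i
    rw [hg_def, integrable_indicator_iff measurableSet_Ioi]
    simpa [neg_mul] using exp_neg_integrableOn_Ioi 0 (hc i)
  have hind : A.indicator (fun x => Real.exp (-(∑ j, c j * x j)))
      = fun x => ∏ i, g i (x i) := by
    funext x
    by_cases hx : x ∈ A
    · rw [Set.indicator_of_mem hx]
      have h1 : ∀ i, g i (x i) = Real.exp (-(c i * x i)) := fun i =>
        Set.indicator_of_mem (hx i) _
      simp_rw [h1, ← Real.exp_sum, ← Finset.sum_neg_distrib]
    · rw [Set.indicator_of_notMem hx]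
      obtain ⟨i, hi⟩ := not_forall.mp hx
      exact (Finset.prod_eq_zero (Finset.mem_univ i)
        (Set.indicator_of_notMem hi _)).symm
  have hprod : Integrable (fun x : Fin N → ℝ => ∏ i, g i (x i)) :=
    Integrable.fintype_prod (𝕜 := ℝ) hgi
  constructor
  · exact (integrable_indicator_iff hA).1 (by rw [hind]; exact hprod)
  · rw [← integral_indicator hA, hind,
      MeasureTheory.integral_fintype_prod_volume_eq_prod (ι := Fin N) g]
    refine Finset.prod_congr rfl fun i _ => ?_
    rw [hg_def]
    simp only
    rw [integral_indicator measurableSet_Ioi, aux_exp_int (hc i)]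

/-- if the open positive orthant is covered, up to Lebesgue-null sets, by
pairwise almost-disjoint cones `C_s = M_s((0,∞)^N)` with `|det M_s| = 1`, and `β` has
positive coordinates with `⟨β, M_s eⱼ⟩ > 0` for all `s, j`, then
`∏ᵢ βᵢ⁻¹ = Σ_s ∏ⱼ ⟨β, M_s eⱼ⟩⁻¹`. -/
theorem stmt14 {N : ℕ} (hN : 1 ≤ N) {ι : Type*} (S : Finset ι)
    (M : ι → Matrix (Fin N) (Fin N) ℝ)
    (hdet : ∀ s ∈ S, |(M s).det| = 1)
    (hsub : ∀ s ∈ S,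
      (fun x => (M s).mulVec x) '' {x : Fin N → ℝ | ∀ i, 0 < x i} ⊆
        {x : Fin N → ℝ | ∀ i, 0 < x i})
    (hnull : ∀ s ∈ S, ∀ s' ∈ S, s ≠ s' →
      volume (((fun x => (M s).mulVec x) '' {x : Fin N → ℝ | ∀ i, 0 < x i}) ∩
        ((fun x => (M s').mulVec x) '' {x : Fin N → ℝ | ∀ i, 0 < x i})) = 0)
    (hcover : volume ({x : Fin N → ℝ | ∀ i, 0 < x i} \
      ⋃ s ∈ S, (fun x => (M s).mulVec x) '' {x : Fin N → ℝ | ∀ i, 0 < x i}) = 0)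
    (β : Fin N → ℝ) (hβpos : ∀ i, 0 < β i)
    (hβ : ∀ s ∈ S, ∀ j : Fin N, 0 < ∑ l : Fin N, β l * M s l j) :
    ∏ i : Fin N, (β i)⁻¹ = ∑ s ∈ S, ∏ j : Fin N, (∑ l : Fin N, β l * M s l j)⁻¹ := by
  classical
  set A : Set (Fin N → ℝ) := {x : Fin N → ℝ | ∀ i, 0 < x i} with hA_def
  set f : (Fin N → ℝ) → ℝ := fun x => Real.exp (-(∑ l, β l * x l)) with hf_def
  obtain ⟨hIntA, hIA⟩ := aux_orthant β hβpos
  have hAmeas : MeasurableSet A := by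
    have : A = Set.pi Set.univ (fun _ => Set.Ioi (0:ℝ)) := by
      ext x; simp [hA_def, Set.mem_pi]
    rw [this]; exact MeasurableSet.univ_pi fun _ => measurableSet_Ioi
  set C : ι → Set (Fin N → ℝ) := fun s => (fun x => (M s).mulVec x) '' A with hC_def
  -- key facts about each cone
  have key : ∀ s ∈ S, MeasurableSet (C s) ∧
      ∫ x in C s, f x = ∏ j, (∑ l, β l * M s l j)⁻¹ := by
    intro s hs
    have hdetne : (M s).det ≠ 0 := by
      intro h
      have h1 := hdet s hs
      rw [h, abs_zero] at h1
      exact one_ne_zero h1.symm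
    have hinj : Function.Injective ((M s).mulVec) :=
      Matrix.mulVec_injective_iff_isUnit.2
        ((Matrix.isUnit_iff_isUnit_det _).2 (isUnit_iff_ne_zero.2 hdetne))
    set L : (Fin N → ℝ) →L[ℝ] (Fin N → ℝ) :=
      LinearMap.toContinuousLinearMap ((M s).mulVecLin) with hL_def
    have hLcoe : ⇑L = (M s).mulVec := by
      rw [hL_def, LinearMap.coe_toContinuousLinearMap']; rfl
    have hmeas : MeasurableSet (C s) := by
      have hemb : MeasurableEmbedding ((M s).mulVec) := by
        have := (LinearMap.isClosedEmbedding_of_injective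
          (f := (M s).mulVecLin) (LinearMap.ker_eq_bot.2 (by
            rw [Matrix.coe_mulVecLin]; exact hinj))).measurableEmbedding
        rwa [Matrix.coe_mulVecLin] at this
      exact hemb.measurableSet_image.2 hAmeas
    refine ⟨hmeas, ?_⟩
    have hfd : ∀ x ∈ A, HasFDerivWithinAt (fun x => (M s).mulVec x) L A x := by
      intro x hx
      exact L.hasFDerivAt.hasFDerivWithinAt
    have hcv := integral_image_eq_integral_abs_det_fderiv_smul volume hAmeas hfd
      (hinj.injOn) f
    have hdetL : L.det = (M s).det := by
      have h2 : (↑L : (Fin N → ℝ) →ₗ[ℝ] (Fin N → ℝ)) = Matrix.toLin' (M s) :=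
        LinearMap.ext fun v => by
          rw [Matrix.toLin'_apply]; exact congrFun hLcoe v
      rw [ContinuousLinearMap.det, h2, LinearMap.det_toLin']
    have hre : ∀ y : Fin N → ℝ,
        ∑ l, β l * (M s).mulVec y l = ∑ j, (∑ l, β l * M s l j) * y j := by
      intro y
      simp only [Matrix.mulVec, dotProduct, Finset.mul_sum, Finset.sum_mul]
      rw [Finset.sum_comm]
      exact Finset.sum_congr rfl fun j _ => Finset.sum_congr rfl fun l _ => by ring
    calc ∫ x in C s, f x = ∫ y in A, |L.det| • f ((M s).mulVec y) := hcv
      _ = ∫ y in A, Real.exp (-(∑ j, (∑ l, β l * M s l j) * y j)) := by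
          refine integral_congr_ae (Filter.Eventually.of_forall fun y => ?_)
          show |L.det| • f ((M s).mulVec y)
            = Real.exp (-(∑ j, (∑ l, β l * M s l j) * y j))
          rw [hdetL, hdet s hs, one_smul, hf_def]
          simp only
          rw [hre y]
      _ = ∏ j, (∑ l, β l * M s l j)⁻¹ := (aux_orthant _ (hβ s hs)).2
  -- the weighted measure
  set ν : Measure (Fin N → ℝ) :=
    volume.withDensity (fun x => ENNReal.ofReal (f x)) with hν_def
  have hac : ν ≪ volume := withDensity_absolutelyContinuous _ _
  have hν_eq : ∀ (T : Set (Fin N → ℝ)), MeasurableSet T → IntegrableOn f T →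
      ν T = ENNReal.ofReal (∫ x in T, f x) := by
    intro T hT hfi
    rw [hν_def, withDensity_apply _ hT,
      ← ofReal_integral_eq_lintegral_ofReal hfi
        (Filter.Eventually.of_forall fun x => (Real.exp_pos _).le)]
  have hIntC : ∀ s ∈ S, IntegrableOn f (C s) := fun s hs =>
    hIntA.mono_set (hsub s hs)
  -- ν A = ν (union)
  have hU : ν A = ν (⋃ s ∈ S, C s) := by
    refine le_antisymm ?_ (measure_mono (Set.iUnion₂_subset hsub))
    calc ν A ≤ ν ((⋃ s ∈ S, C s) ∪ (A \ ⋃ s ∈ S, C s)) := by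
          refine measure_mono fun x hx => ?_
          by_cases h : x ∈ ⋃ s ∈ S, C s
          · exact Or.inl h
          · exact Or.inr ⟨hx, h⟩
      _ ≤ ν (⋃ s ∈ S, C s) + ν (A \ ⋃ s ∈ S, C s) := measure_union_le _ _
      _ = ν (⋃ s ∈ S, C s) := by rw [hac hcover, add_zero]
  have hsum : ν (⋃ s ∈ S, C s) = ∑ s ∈ S, ν (C s) := by
    refine measure_biUnion_finset₀ ?_ fun s hs => ((key s hs).1).nullMeasurableSet
    intro s hs s' hs' hne
    exact hac (hnull s hs s' hs' hne)
  have hmain : ENNReal.ofReal (∏ i, (β i)⁻¹)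
      = ENNReal.ofReal (∑ s ∈ S, ∏ j, (∑ l, β l * M s l j)⁻¹) := by
    calc ENNReal.ofReal (∏ i, (β i)⁻¹) = ν A := by
          rw [hν_eq A hAmeas hIntA, hIA]
      _ = ∑ s ∈ S, ν (C s) := by rw [hU, hsum]
      _ = ∑ s ∈ S, ENNReal.ofReal (∏ j, (∑ l, β l * M s l j)⁻¹) := by
          refine Finset.sum_congr rfl fun s hs => ?_
          rw [hν_eq (C s) (key s hs).1 (hIntC s hs), (key s hs).2]
      _ = ENNReal.ofReal (∑ s ∈ S, ∏ j, (∑ l, β l * M s l j)⁻¹) := by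
          rw [ENNReal.ofReal_sum_of_nonneg]
          intro s hs
          exact Finset.prod_nonneg fun j _ => inv_nonneg.2 (hβ s hs j).le
  have h1 : (0:ℝ) ≤ ∏ i, (β i)⁻¹ :=
    Finset.prod_nonneg fun i _ => inv_nonneg.2 (hβpos i).le
  have h2 : (0:ℝ) ≤ ∑ s ∈ S, ∏ j, (∑ l, β l * M s l j)⁻¹ :=
    Finset.sum_nonneg fun s hs =>
      Finset.prod_nonneg fun j _ => inv_nonneg.2 (hβ s hs j).le
  exact (ENNReal.ofReal_eq_ofReal_iff h1 h2).1 hmain
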